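/- Let ς > 1 and ϱ ∈ (0,1), and define υ(α) = ((ς−1)·cos α + ϱ)/(cos α + sin α − 1) − (cos α + sin α − 1)/((ς+1)·cos α + ϱ) for α ∈ (0, π/2). Then: (a) υ is a strictly convex function on (0, π/2); (b) υ(α) → +∞ as α → 0⁺ and υ(α) → +∞ as α → (π/2)⁻; (c) υ has at most two zeros in (0, π/2). -/

import Mathlib

open Real Filter Set

private lemma mid_zero {f : ℝ → ℝ} {s : Set ℝ} (hf : StrictConvexOn ℝ s f) {x y z : ℝ}
    (hx : x ∈ s) (hz : z ∈ s) (h1 : x < y) (h2 : y < z)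
    (fx : f x = 0) (fy : f y = 0) (fz : f z = 0) : False := by
  have hxz : x ≠ z := ne_of_lt (h1.trans h2)
  set a := (z - y) / (z - x) with ha'
  set b := (y - x) / (z - x) with hb'
  have hzx : (0:ℝ) < z - x := by linarith
  have ha : 0 < a := div_pos (by linarith) hzx
  have hb : 0 < b := div_pos (by linarith) hzx
  have hab : a + b = 1 := by rw [ha', hb']; field_simp; ring
  have hy : a • x + b • z = y := by
    rw [ha', hb', smul_eq_mul, smul_eq_mul]
    field_simp
    ring
  have key := hf.2 hx hz hxz ha hb hab
  rw [hy, fx, fy, fz, smul_eq_mul, smul_eq_mul] at key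
  simp at key

private lemma circle_facts {x : ℝ} (hx : x ∈ Set.Ioo 0 (π/2)) :
    0 < Real.sin x ∧ Real.sin x < 1 ∧ 0 < Real.cos x ∧ Real.cos x < 1 ∧
      0 < Real.cos x + Real.sin x - 1 := by
  obtain ⟨h0, h1⟩ := hx
  have hs : 0 < Real.sin x := Real.sin_pos_of_pos_of_lt_pi h0 (by linarith [Real.pi_div_two_pos])
  have hc : 0 < Real.cos x := Real.cos_pos_of_mem_Ioo ⟨by linarith [Real.pi_div_two_pos], h1⟩
  have hp := Real.sin_sq_add_cos_sq x
  have hs1 : Real.sin x < 1 := by nlinarith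
  have hc1 : Real.cos x < 1 := by nlinarith
  exact ⟨hs, hs1, hc, hc1, by nlinarith⟩

private lemma sc_f1 {k ϱ : ℝ} (hk : 0 < k) (hϱ : 0 < ϱ) :
    StrictConvexOn ℝ (Set.Ioo 0 (π/2))
      (fun α => (k * Real.cos α + ϱ) / (Real.cos α + Real.sin α - 1)) := by
  set f : ℝ → ℝ := fun α => (k * Real.cos α + ϱ) / (Real.cos α + Real.sin α - 1) with hf
  set d : ℝ → ℝ := fun α =>
    (k * (Real.sin α - 1) + ϱ * (Real.sin α - Real.cos α)) / (Real.cos α + Real.sin α - 1) ^ 2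
    with hd
  have hder : ∀ y ∈ Set.Ioo (0:ℝ) (π/2), HasDerivAt f (d y) y := by
    intro y hy
    obtain ⟨hs, hs1, hc, hc1, hg⟩ := circle_facts hy
    have hu : HasDerivAt (fun α => k * Real.cos α + ϱ) (k * (-Real.sin y)) y :=
      ((Real.hasDerivAt_cos y).const_mul k).add_const ϱ
    have hv : HasDerivAt (fun α => Real.cos α + Real.sin α - 1)
        (-Real.sin y + Real.cos y) y :=
      ((Real.hasDerivAt_cos y).add (Real.hasDerivAt_sin y)).sub_const 1
    have := hu.div hv hg.ne'
    refine this.congr_deriv ?_; symm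
    rw [hd]
    have hp := Real.sin_sq_add_cos_sq y
    field_simp
    ring_nf
    nlinarith [Real.sin_sq_add_cos_sq y, sq_nonneg (Real.cos y + Real.sin y - 1)]
  apply strictConvexOn_of_deriv2_pos (convex_Ioo _ _)
  · intro y hy
    exact ((hder y hy).differentiableAt.continuousAt).continuousWithinAt
  · intro x hx
    rw [interior_Ioo] at hx
    obtain ⟨hs, hs1, hc, hc1, hg⟩ := circle_facts hx
    have hev : deriv f =ᶠ[nhds x] d := by
      filter_upwards [isOpen_Ioo.mem_nhds hx] with y hy
      exact (hder y hy).deriv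
    have h2 : deriv^[2] f x = deriv d x := by
      simp only [Function.iterate_succ, Function.iterate_zero, Function.comp_apply, id_eq]
      exact hev.deriv_eq
    rw [h2]
    have hN : HasDerivAt (fun α => k * (Real.sin α - 1) + ϱ * (Real.sin α - Real.cos α))
        (k * Real.cos x + ϱ * (Real.cos x + Real.sin x)) x := by
      have h1 : HasDerivAt (fun α => k * (Real.sin α - 1)) (k * Real.cos x) x :=
        (((Real.hasDerivAt_sin x).sub_const 1).const_mul k)
      have h2' : HasDerivAt (fun α => ϱ * (Real.sin α - Real.cos α))
          (ϱ * (Real.cos x - (-Real.sin x))) x :=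
        (((Real.hasDerivAt_sin x).sub (Real.hasDerivAt_cos x)).const_mul ϱ)
      have := h1.add h2'
      exact this.congr_deriv (by ring)
    have hv : HasDerivAt (fun α => Real.cos α + Real.sin α - 1)
        (-Real.sin x + Real.cos x) x :=
      ((Real.hasDerivAt_cos x).add (Real.hasDerivAt_sin x)).sub_const 1
    have hw : HasDerivAt (fun α => (Real.cos α + Real.sin α - 1) ^ 2)
        ((2:ℕ) * (Real.cos x + Real.sin x - 1) ^ 1 * (-Real.sin x + Real.cos x)) x := hv.pow 2
    have hdd := hN.div hw (by positivity)
    rw [hd]; erw [hdd.deriv]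
    set s := Real.sin x
    set c := Real.cos x
    have hp : s^2 + c^2 = 1 := Real.sin_sq_add_cos_sq x
    have hM : 0 < (k * c + ϱ * (c + s)) * (c + s - 1)
        - 2 * (k * (s - 1) + ϱ * (s - c)) * (-s + c) := by
      have e1 : (k * c + ϱ * (c + s)) * (c + s - 1)
          - 2 * (k * (s - 1) + ϱ * (s - c)) * (-s + c)
          = k * ((1 - s) * (1 + c - s)) + ϱ * (3 - 2*c*s - c - s) := by
        linear_combination (k + 3*ϱ) * hp
      rw [e1]
      have h3 : 0 < 3 - 2*c*s - c - s := by nlinarith [sq_nonneg (c - s)]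
      have h4 : 0 < (1 - s) * (1 + c - s) := by nlinarith
      positivity
    have heq : (k * c + ϱ * (c + s)) * ((c + s - 1) ^ 2) -
          (k * (s - 1) + ϱ * (s - c)) * ((2:ℕ) * (c + s - 1) ^ 1 * (-s + c))
        = (c + s - 1) * ((k * c + ϱ * (c + s)) * (c + s - 1)
            - 2 * (k * (s - 1) + ϱ * (s - c)) * (-s + c)) := by push_cast; ring
    rw [heq]
    positivity

private lemma sc_f2 {K ϱ : ℝ} (hK : 0 < K) (hϱ : 0 < ϱ) :
    StrictConvexOn ℝ (Set.Ioo 0 (π/2))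
      (fun α => -((Real.cos α + Real.sin α - 1) / (K * Real.cos α + ϱ))) := by
  set f : ℝ → ℝ := fun α => -((Real.cos α + Real.sin α - 1) / (K * Real.cos α + ϱ)) with hf
  set d : ℝ → ℝ := fun α =>
    (K * (Real.sin α - 1) + ϱ * (Real.sin α - Real.cos α)) / (K * Real.cos α + ϱ) ^ 2
    with hd
  have hBpos : ∀ y ∈ Set.Ioo (0:ℝ) (π/2), 0 < K * Real.cos y + ϱ := by
    intro y hy
    obtain ⟨_, _, hc, _, _⟩ := circle_facts hy
    positivity
  have hder : ∀ y ∈ Set.Ioo (0:ℝ) (π/2), HasDerivAt f (d y) y := by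
    intro y hy
    obtain ⟨hs, hs1, hc, hc1, hg⟩ := circle_facts hy
    have hB := hBpos y hy
    have hv : HasDerivAt (fun α => Real.cos α + Real.sin α - 1)
        (-Real.sin y + Real.cos y) y :=
      ((Real.hasDerivAt_cos y).add (Real.hasDerivAt_sin y)).sub_const 1
    have hu : HasDerivAt (fun α => K * Real.cos α + ϱ) (K * (-Real.sin y)) y :=
      ((Real.hasDerivAt_cos y).const_mul K).add_const ϱ
    have := (hv.div hu hB.ne').neg
    refine this.congr_deriv ?_; symm
    rw [hd]
    have hp := Real.sin_sq_add_cos_sq y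
    field_simp
    ring_nf
    nlinarith [Real.sin_sq_add_cos_sq y, sq_nonneg (K * Real.cos y + ϱ)]
  apply strictConvexOn_of_deriv2_pos (convex_Ioo _ _)
  · intro y hy
    exact ((hder y hy).differentiableAt.continuousAt).continuousWithinAt
  · intro x hx
    rw [interior_Ioo] at hx
    obtain ⟨hs, hs1, hc, hc1, hg⟩ := circle_facts hx
    have hB := hBpos x hx
    have hev : deriv f =ᶠ[nhds x] d := by
      filter_upwards [isOpen_Ioo.mem_nhds hx] with y hy
      exact (hder y hy).deriv
    have h2 : deriv^[2] f x = deriv d x := by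
      simp only [Function.iterate_succ, Function.iterate_zero, Function.comp_apply, id_eq]
      exact hev.deriv_eq
    rw [h2]
    have hN : HasDerivAt (fun α => K * (Real.sin α - 1) + ϱ * (Real.sin α - Real.cos α))
        (K * Real.cos x + ϱ * (Real.cos x + Real.sin x)) x := by
      have h1 : HasDerivAt (fun α => K * (Real.sin α - 1)) (K * Real.cos x) x :=
        (((Real.hasDerivAt_sin x).sub_const 1).const_mul K)
      have h2' : HasDerivAt (fun α => ϱ * (Real.sin α - Real.cos α))
          (ϱ * (Real.cos x - (-Real.sin x))) x :=
        (((Real.hasDerivAt_sin x).sub (Real.hasDerivAt_cos x)).const_mul ϱ)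
      have := h1.add h2'
      exact this.congr_deriv (by ring)
    have hu : HasDerivAt (fun α => K * Real.cos α + ϱ) (K * (-Real.sin x)) x :=
      ((Real.hasDerivAt_cos x).const_mul K).add_const ϱ
    have hw : HasDerivAt (fun α => (K * Real.cos α + ϱ) ^ 2)
        ((2:ℕ) * (K * Real.cos x + ϱ) ^ 1 * (K * (-Real.sin x))) x := hu.pow 2
    have hdd := hN.div hw (by positivity)
    rw [hd]; erw [hdd.deriv]
    set s := Real.sin x
    set c := Real.cos x
    have hp : s^2 + c^2 = 1 := Real.sin_sq_add_cos_sq x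
    have hM : 0 < (K * c + ϱ * (c + s)) * (K * c + ϱ)
        - 2 * (K * (s - 1) + ϱ * (s - c)) * (K * (-s)) := by
      have e1 : (K * c + ϱ * (c + s)) * (K * c + ϱ)
          - 2 * (K * (s - 1) + ϱ * (s - c)) * (K * (-s))
          = K^2 * (1 - s)^2 + K * ϱ * (c * (1 - s) + c^2 + 2*s^2) + ϱ^2 * (c + s) := by
        linear_combination K^2 * hp
      rw [e1]
      have h3 : 0 < c * (1 - s) + c^2 + 2*s^2 := by nlinarith
      have h4 : (0:ℝ) ≤ K^2 * (1 - s)^2 := by positivity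
      have h5 : 0 < K * ϱ * (c * (1 - s) + c^2 + 2*s^2) := mul_pos (mul_pos hK hϱ) h3
      have h6 : 0 < ϱ^2 * (c + s) := by positivity
      linarith
    have heq : (K * c + ϱ * (c + s)) * ((K * c + ϱ) ^ 2) -
          (K * (s - 1) + ϱ * (s - c)) * ((2:ℕ) * (K * c + ϱ) ^ 1 * (K * (-s)))
        = (K * c + ϱ) * ((K * c + ϱ * (c + s)) * (K * c + ϱ)
            - 2 * (K * (s - 1) + ϱ * (s - c)) * (K * (-s))) := by push_cast; ring
    rw [heq]
    positivity

/-- Proposition 5: υ is strictly convex on (0, π/2), blows up at both endpoints,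
and has at most two zeros there. -/
theorem upsilon_convex_two_roots (ς ϱ : ℝ) (hς : 1 < ς) (hϱ0 : 0 < ϱ) (hϱ1 : ϱ < 1)
    (υ : ℝ → ℝ)
    (hυ : ∀ α, υ α =
      ((ς - 1) * Real.cos α + ϱ) / (Real.cos α + Real.sin α - 1)
        - (Real.cos α + Real.sin α - 1) / ((ς + 1) * Real.cos α + ϱ)) :
    StrictConvexOn ℝ (Set.Ioo 0 (π / 2)) υ ∧
    Tendsto υ (nhdsWithin 0 (Set.Ioi 0)) atTop ∧
    Tendsto υ (nhdsWithin (π / 2) (Set.Iio (π / 2))) atTop ∧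
    Set.encard {α | α ∈ Set.Ioo 0 (π / 2) ∧ υ α = 0} ≤ 2 := by
  have hveq : υ = fun α =>
      ((ς - 1) * Real.cos α + ϱ) / (Real.cos α + Real.sin α - 1)
        - (Real.cos α + Real.sin α - 1) / ((ς + 1) * Real.cos α + ϱ) := funext hυ
  subst hveq
  have hk : (0:ℝ) < ς - 1 := by linarith
  have hK : (0:ℝ) < ς + 1 := by linarith
  -- strict convexity
  have hconv : StrictConvexOn ℝ (Set.Ioo 0 (π / 2)) (fun α =>
      ((ς - 1) * Real.cos α + ϱ) / (Real.cos α + Real.sin α - 1)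
        - (Real.cos α + Real.sin α - 1) / ((ς + 1) * Real.cos α + ϱ)) := by
    have h1 := sc_f1 hk hϱ0
    have h2 := sc_f2 hK hϱ0
    have h12 := h1.add h2
    have hfe : (fun α =>
        ((ς - 1) * Real.cos α + ϱ) / (Real.cos α + Real.sin α - 1)
          - (Real.cos α + Real.sin α - 1) / ((ς + 1) * Real.cos α + ϱ))
        = (fun α => ((ς - 1) * Real.cos α + ϱ) / (Real.cos α + Real.sin α - 1))
          + (fun α => -((Real.cos α + Real.sin α - 1) / ((ς + 1) * Real.cos α + ϱ))) := by
      funext α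
      simp [Pi.add_apply, sub_eq_add_neg]
    rw [hfe]
    exact h12
  refine ⟨hconv, ?_, ?_, ?_⟩
  · -- limit at 0⁺
    have hA : Tendsto (fun α => (ς - 1) * Real.cos α + ϱ) (nhdsWithin 0 (Set.Ioi 0))
        (nhds ((ς - 1) + ϱ)) := by
      have hcont : Continuous fun α : ℝ => (ς - 1) * Real.cos α + ϱ := (continuous_const.mul Real.continuous_cos).add continuous_const
      have := hcont.tendsto 0
      simp only [Real.cos_zero, mul_one] at this
      exact this.mono_left nhdsWithin_le_nhds
    have hIoo : Set.Ioo (0:ℝ) (π/2) ∈ nhdsWithin (0:ℝ) (Set.Ioi 0) :=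
      Ioo_mem_nhdsGT_of_mem ⟨le_refl _, Real.pi_div_two_pos⟩
    have hg0 : Tendsto (fun α => Real.cos α + Real.sin α - 1) (nhdsWithin 0 (Set.Ioi 0))
        (nhdsWithin 0 (Set.Ioi 0)) := by
      rw [tendsto_nhdsWithin_iff]
      constructor
      · have hcont : Continuous fun α : ℝ => Real.cos α + Real.sin α - 1 := (Real.continuous_cos.add Real.continuous_sin).sub continuous_const
        have := hcont.tendsto 0
        simp only [Real.cos_zero, Real.sin_zero, add_zero, sub_self] at this
        exact this.mono_left nhdsWithin_le_nhds
      · filter_upwards [hIoo] with y hy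
        exact (circle_facts hy).2.2.2.2
    have hinv : Tendsto (fun α => (Real.cos α + Real.sin α - 1)⁻¹)
        (nhdsWithin 0 (Set.Ioi 0)) atTop := tendsto_inv_nhdsGT_zero.comp hg0
    have hfirst : Tendsto (fun α =>
        ((ς - 1) * Real.cos α + ϱ) / (Real.cos α + Real.sin α - 1))
        (nhdsWithin 0 (Set.Ioi 0)) atTop := by
      have := Filter.Tendsto.pos_mul_atTop (by linarith : (0:ℝ) < (ς - 1) + ϱ) hA hinv
      simpa [div_eq_mul_inv] using this
    have hg0' : Tendsto (fun α => Real.cos α + Real.sin α - 1) (nhdsWithin 0 (Set.Ioi 0))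
        (nhds 0) := hg0.mono_right nhdsWithin_le_nhds
    have hB : Tendsto (fun α => (ς + 1) * Real.cos α + ϱ) (nhdsWithin 0 (Set.Ioi 0))
        (nhds ((ς + 1) + ϱ)) := by
      have hcont : Continuous fun α : ℝ => (ς + 1) * Real.cos α + ϱ := (continuous_const.mul Real.continuous_cos).add continuous_const
      have := hcont.tendsto 0
      simp only [Real.cos_zero, mul_one] at this
      exact this.mono_left nhdsWithin_le_nhds
    have hsecond : Tendsto (fun α =>
        (Real.cos α + Real.sin α - 1) / ((ς + 1) * Real.cos α + ϱ))
        (nhdsWithin 0 (Set.Ioi 0)) (nhds 0) := by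
      have := hg0'.div hB (by linarith : (ς + 1) + ϱ ≠ 0)
      rw [zero_div] at this; exact this
    have := hfirst.atTop_add (hsecond.neg)
    simp only [sub_eq_add_neg]
    convert this using 1
    simp only [sub_eq_add_neg]
  · -- limit at (π/2)⁻
    have hA : Tendsto (fun α => (ς - 1) * Real.cos α + ϱ) (nhdsWithin (π/2) (Set.Iio (π/2)))
        (nhds ϱ) := by
      have hcont : Continuous fun α : ℝ => (ς - 1) * Real.cos α + ϱ := (continuous_const.mul Real.continuous_cos).add continuous_const
      have := hcont.tendsto (π/2)
      simp only [Real.cos_pi_div_two, mul_zero, zero_add] at this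
      exact this.mono_left nhdsWithin_le_nhds
    have hIoo : Set.Ioo (0:ℝ) (π/2) ∈ nhdsWithin (π/2) (Set.Iio (π/2)) :=
      Ioo_mem_nhdsLT_of_mem ⟨Real.pi_div_two_pos, le_refl _⟩
    have hg0 : Tendsto (fun α => Real.cos α + Real.sin α - 1)
        (nhdsWithin (π/2) (Set.Iio (π/2))) (nhdsWithin 0 (Set.Ioi 0)) := by
      rw [tendsto_nhdsWithin_iff]
      constructor
      · have hcont : Continuous fun α : ℝ => Real.cos α + Real.sin α - 1 := (Real.continuous_cos.add Real.continuous_sin).sub continuous_const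
        have := hcont.tendsto (π/2)
        simp only [Real.cos_pi_div_two, Real.sin_pi_div_two, zero_add, sub_self] at this
        exact this.mono_left nhdsWithin_le_nhds
      · filter_upwards [hIoo] with y hy
        exact (circle_facts hy).2.2.2.2
    have hinv : Tendsto (fun α => (Real.cos α + Real.sin α - 1)⁻¹)
        (nhdsWithin (π/2) (Set.Iio (π/2))) atTop := tendsto_inv_nhdsGT_zero.comp hg0
    have hfirst : Tendsto (fun α =>
        ((ς - 1) * Real.cos α + ϱ) / (Real.cos α + Real.sin α - 1))
        (nhdsWithin (π/2) (Set.Iio (π/2))) atTop := by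
      have := Filter.Tendsto.pos_mul_atTop hϱ0 hA hinv
      simpa [div_eq_mul_inv] using this
    have hg0' : Tendsto (fun α => Real.cos α + Real.sin α - 1)
        (nhdsWithin (π/2) (Set.Iio (π/2))) (nhds 0) := hg0.mono_right nhdsWithin_le_nhds
    have hB : Tendsto (fun α => (ς + 1) * Real.cos α + ϱ)
        (nhdsWithin (π/2) (Set.Iio (π/2))) (nhds ϱ) := by
      have hcont : Continuous fun α : ℝ => (ς + 1) * Real.cos α + ϱ := (continuous_const.mul Real.continuous_cos).add continuous_const
      have := hcont.tendsto (π/2)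
      simp only [Real.cos_pi_div_two, mul_zero, zero_add] at this
      exact this.mono_left nhdsWithin_le_nhds
    have hsecond : Tendsto (fun α =>
        (Real.cos α + Real.sin α - 1) / ((ς + 1) * Real.cos α + ϱ))
        (nhdsWithin (π/2) (Set.Iio (π/2))) (nhds 0) := by
      have := hg0'.div hB hϱ0.ne'
      rw [zero_div] at this; exact this
    have := hfirst.atTop_add (hsecond.neg)
    simp only [sub_eq_add_neg]
    convert this using 1
    simp only [sub_eq_add_neg]
  · -- at most two zeros
    set S := {α | α ∈ Set.Ioo 0 (π / 2) ∧
      ((ς - 1) * Real.cos α + ϱ) / (Real.cos α + Real.sin α - 1)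
        - (Real.cos α + Real.sin α - 1) / ((ς + 1) * Real.cos α + ϱ) = 0} with hS
    by_contra hcon
    push_neg at hcon
    obtain ⟨a, b, haS, hbS, hab⟩ := Set.one_lt_encard_iff.1 (lt_trans (by norm_num : (1:ℕ∞) < 2) hcon)
    have hsub : ¬ S ⊆ {a, b} := by
      intro hsub
      have h1 : S.encard ≤ ({a, b} : Set ℝ).encard := Set.encard_mono hsub
      have h2 : ({a, b} : Set ℝ).encard ≤ 2 := by
        calc ({a, b} : Set ℝ).encard ≤ ({b} : Set ℝ).encard + 1 := Set.encard_insert_le _ _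
        _ = 2 := by rw [Set.encard_singleton]; rfl
      exact absurd (h1.trans h2) (not_le.2 hcon)
    obtain ⟨c, hcS, hc⟩ := Set.not_subset.1 hsub
    simp only [Set.mem_insert_iff, Set.mem_singleton_iff, not_or] at hc
    obtain ⟨hca, hcb⟩ := hc
    -- three distinct zeros a, b, c
    obtain ⟨haI, ha0⟩ := haS
    obtain ⟨hbI, hb0⟩ := hbS
    obtain ⟨hcI, hc0⟩ := hcS
    -- sort and apply mid_zero
    rcases lt_trichotomy a b with h1 | h1 | h1
    · rcases lt_trichotomy b c with h2 | h2 | h2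
      · exact mid_zero hconv haI hcI h1 h2 ha0 hb0 hc0
      · exact hcb h2.symm
      · rcases lt_trichotomy a c with h3 | h3 | h3
        · exact mid_zero hconv haI hbI h3 h2 ha0 hc0 hb0
        · exact hca h3.symm
        · exact mid_zero hconv hcI hbI h3 h1 hc0 ha0 hb0
    · exact hab h1
    · rcases lt_trichotomy a c with h2 | h2 | h2
      · exact mid_zero hconv hbI hcI h1 h2 hb0 ha0 hc0
      · exact hca h2.symm
      · rcases lt_trichotomy b c with h3 | h3 | h3
        · exact mid_zero hconv hbI haI h3 h2 hb0 hc0 ha0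
        · exact hcb h3.symm
        · exact mid_zero hconv hcI haI h3 h1 hc0 hb0 ha0
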